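/- Breakdown point of redescending M-posteriors: Let ρ: ℝ→[0,∞) be even with ρ(0) = 0, nondecreasing on [0,∞), satisfying lim_{|x|→∞} ρ(x) = ∞ and lim_{|x|→∞} ρ(x)/|x| = 0, with continuous derivative ψ = ρ' for which there exists x_0 > 0 with ψ nondecreasing on (0,x_0) and nonincreasing on (x_0,∞). Let π be a (possibly improper) prior density such that ∫_ℝ θ² π(θ) exp(−ρ(θ)) dθ < ∞ and the location M-posterior π_n^ρ(·|F̃_n) is well defined for every sample. Then for every m with 2m < n, sup_{X̃∈B_H(X^n,m)} W_2(π_n^ρ(·|F̃_n), π_n^ρ(·|F_n)) < ∞; hence ε*_{W2}(π_n^ρ,X^n) ≥ 1/2. If moreover π ≡ 1, then ε*_{W2}(π_n^ρ,X^n) = 1/2. -/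

import Mathlib

open MeasureTheory ENNReal Filter

open MeasureTheory ENNReal

/-- Density of the location M-posterior on `ℝ` with loss `ρ`, prior density `w`, sample `Y`. -/
noncomputable def locPostDensity (ρ w : ℝ → ℝ) {n : ℕ} (Y : Fin n → ℝ) (θ : ℝ) : ℝ :=
  w θ * Real.exp (-∑ j, ρ (Y j - θ)) / ∫ t : ℝ, w t * Real.exp (-∑ j, ρ (Y j - t))

/-- The location M-posterior as a measure on `ℝ`. -/
noncomputable def locPostMeasure (ρ w : ℝ → ℝ) {n : ℕ} (Y : Fin n → ℝ) : Measure ℝ :=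
  MeasureTheory.volume.withDensity fun θ => ENNReal.ofReal (locPostDensity ρ w Y θ)

/-- The 2-Wasserstein distance between measures on `ℝ` (square root of the infimum over
couplings of `∫(x−y)²dγ`). -/
noncomputable def W2 (P Q : Measure ℝ) : ℝ≥0∞ :=
  (⨅ (γ : Measure (ℝ × ℝ)) (_ : γ.map Prod.fst = P ∧ γ.map Prod.snd = Q),
    ∫⁻ z, ENNReal.ofReal ((z.1 - z.2) ^ 2) ∂γ) ^ (1 / 2 : ℝ)

open scoped Classical in
/-- The set of samples differing from `X` in at most `m` entries. -/
noncomputable def hammingBall {α : Type*} {n : ℕ} (X : Fin n → α) (m : ℕ) :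
    Set (Fin n → α) :=
  {Y | (Finset.univ.filter fun i => Y i ≠ X i).card ≤ m}

/-- The worst-case 2-Wasserstein deviation of the M-posterior over samples corrupted in at
most `m` entries. -/
noncomputable def supW2 (ρ w : ℝ → ℝ) {n : ℕ} (X : Fin n → ℝ) (m : ℕ) : ℝ≥0∞ :=
  ⨆ Y ∈ hammingBall X m, W2 (locPostMeasure ρ w Y) (locPostMeasure ρ w X)

/-- The posterior breakdown point: the least fraction `m/n` of corrupted points driving the
M-posterior arbitrarily far in 2-Wasserstein distance. -/
noncomputable def breakdownPoint (ρ w : ℝ → ℝ) {n : ℕ} (X : Fin n → ℝ) : ℝ :=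
  sInf {r : ℝ | ∃ m : ℕ, m ≤ n ∧ r = (m : ℝ) / n ∧ supW2 ρ w X m = ⊤}

section AuxiliaryLemmas

lemma rho_subadd_aux
    (ρ ψ : ℝ → ℝ)
    (hnn : ∀ x, 0 ≤ ρ x) (heven : ∀ x, ρ (-x) = ρ x)
    (hmono : MonotoneOn ρ (Set.Ici 0))
    (hderiv : ∀ x, HasDerivAt ρ (ψ x) x) (hψcont : Continuous ψ)
    (x₀ : ℝ) (hx₀ : 0 < x₀)
    (hψup : MonotoneOn ψ (Set.Ioo 0 x₀)) (hψdown : AntitoneOn ψ (Set.Ioi x₀)) :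
    ∃ C : ℝ, 0 ≤ C ∧ ∀ u v : ℝ, ρ (u + v) ≤ ρ u + ρ v + C := by
  -- ψ 0 = 0
  have hψ0 : ψ 0 = 0 := by
    have h1 : HasDerivAt (fun x : ℝ => ρ (-x)) (ψ (-(0:ℝ)) * (-1)) 0 :=
      (hderiv (-(0:ℝ))).comp 0 (hasDerivAt_neg 0)
    have he : (fun x : ℝ => ρ (-x)) = ρ := funext heven
    rw [he, neg_zero] at h1
    have := h1.unique (hderiv 0)
    linarith
  -- ψ nonneg on [0,∞)
  have hψnn : ∀ x : ℝ, 0 ≤ x → 0 ≤ ψ x := by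
    intro x hx
    have h := hasDerivAt_iff_tendsto_slope.mp (hderiv x)
    have h' : Tendsto (slope ρ x) (nhdsWithin x (Set.Ioi x)) (nhds (ψ x)) :=
      h.mono_left (nhdsWithin_mono x (fun y hy => ne_of_gt hy))
    refine ge_of_tendsto h' ?_
    filter_upwards [self_mem_nhdsWithin] with y hy
    rw [slope_def_field]
    apply div_nonneg _ (by linarith [Set.mem_Ioi.mp hy])
    have := hmono (Set.mem_Ici.mpr hx) (Set.mem_Ici.mpr (hx.trans (le_of_lt hy))) (le_of_lt hy)
    linarith
  -- ψ ≤ ψ x₀ on [0,∞)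
  have hψle : ∀ t : ℝ, 0 ≤ t → ψ t ≤ ψ x₀ := by
    intro t ht
    rcases lt_trichotomy t x₀ with h | h | h
    · rcases eq_or_lt_of_le ht with h0 | h0
      · rw [← h0, hψ0]; exact hψnn x₀ hx₀.le
      · have htend : Tendsto ψ (nhdsWithin x₀ (Set.Iio x₀)) (nhds (ψ x₀)) :=
          (hψcont.tendsto x₀).mono_left nhdsWithin_le_nhds
        refine ge_of_tendsto htend ?_
        filter_upwards [Ioo_mem_nhdsLT_of_mem (Set.mem_Ioc.mpr ⟨h, le_refl _⟩)] with s hs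
        exact hψup (Set.mem_Ioo.mpr ⟨h0, h⟩) (Set.mem_Ioo.mpr ⟨h0.trans hs.1, hs.2⟩) hs.1.le
    · rw [h]
    · have htend : Tendsto ψ (nhdsWithin x₀ (Set.Ioi x₀)) (nhds (ψ x₀)) :=
        (hψcont.tendsto x₀).mono_left nhdsWithin_le_nhds
      refine ge_of_tendsto htend ?_
      filter_upwards [Ioo_mem_nhdsGT_of_mem (Set.mem_Ico.mpr ⟨le_refl _, h⟩)] with s hs
      exact hψdown (Set.mem_Ioi.mpr hs.1) (Set.mem_Ioi.mpr (hs.1.trans hs.2)) hs.2.le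
  -- ψ(s+d) ≤ ψ s for s ≥ x₀, d ≥ 0
  have hdown' : ∀ s : ℝ, x₀ ≤ s → ∀ d : ℝ, 0 ≤ d → ψ (s + d) ≤ ψ s := by
    intro s hs d hd
    rcases eq_or_lt_of_le hd with h0 | h0
    · rw [← h0, add_zero]
    rcases eq_or_lt_of_le hs with h1 | h1
    · rw [← h1]; exact hψle (x₀ + d) (by linarith)
    · exact hψdown (Set.mem_Ioi.mpr h1) (Set.mem_Ioi.mpr (by linarith)) (by linarith)
  have ftc : ∀ u v : ℝ, ∫ t in u..v, ψ t = ρ v - ρ u := fun u v =>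
    intervalIntegral.integral_eq_sub_of_hasDerivAt (fun x _ => hderiv x)
      (hψcont.intervalIntegrable u v)
  -- step1
  have step1 : ∀ a : ℝ, 0 ≤ a → ∀ b : ℝ, x₀ ≤ b → ρ (b + a) ≤ ρ b + (ρ (x₀ + a) - ρ x₀) := by
    intro a ha b hb
    have key : ∫ t in b..(b + a), ψ t ≤ ∫ t in x₀..(x₀ + a), ψ t := by
      have hcomp : ∫ x in x₀..(x₀ + a), ψ (x + (b - x₀)) = ∫ t in b..(b + a), ψ t := by
        rw [intervalIntegral.integral_comp_add_right]
        ring_nf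
      rw [← hcomp]
      apply intervalIntegral.integral_mono_on (by linarith)
        ((hψcont.comp (continuous_id.add continuous_const)).intervalIntegrable _ _)
        (hψcont.intervalIntegrable _ _)
      intro x hx
      have : ψ (x + (b - x₀)) ≤ ψ x := hdown' x hx.1 (b - x₀) (by linarith)
      exact this
    rw [ftc, ftc] at key
    linarith
  -- step2
  have step2 : ∀ a : ℝ, 0 ≤ a → ρ (x₀ + a) ≤ ρ a + x₀ * ψ x₀ := by
    intro a ha
    have key : ∫ t in a..(a + x₀), ψ t ≤ ∫ _t in a..(a + x₀), ψ x₀ := by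
      apply intervalIntegral.integral_mono_on (by linarith)
        (hψcont.intervalIntegrable _ _)
        (intervalIntegrable_const)
      intro x hx
      exact hψle x (le_trans ha hx.1)
    rw [ftc, intervalIntegral.integral_const, smul_eq_mul] at key
    have : ρ (a + x₀) = ρ (x₀ + a) := by ring_nf
    rw [this] at key
    nlinarith
  set C : ℝ := x₀ * ψ x₀ + ρ (2 * x₀) with hC
  have hCnn : 0 ≤ C := add_nonneg (mul_nonneg hx₀.le (hψnn x₀ hx₀.le)) (hnn _)
  have aux : ∀ a b : ℝ, 0 ≤ a → a ≤ b → ρ (a + b) ≤ ρ a + ρ b + C := by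
    intro a b ha hab
    rcases le_or_gt x₀ b with hb | hb
    · have h1 := step1 a ha b hb
      have h2 := step2 a ha
      have h3 := hnn x₀
      have h4 := hnn (2 * x₀)
      have : ρ (a + b) = ρ (b + a) := by ring_nf
      rw [this]
      linarith
    · have h1 : ρ (a + b) ≤ ρ (2 * x₀) :=
        hmono (Set.mem_Ici.mpr (by linarith)) (Set.mem_Ici.mpr (by linarith)) (by linarith)
      have := hnn a; have := hnn b
      have := mul_nonneg hx₀.le (hψnn x₀ hx₀.le)
      linarith
  have rabs : ∀ x : ℝ, ρ x = ρ |x| := by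
    intro x
    rcases abs_cases x with ⟨h, _⟩ | ⟨h, _⟩
    · rw [h]
    · rw [h, heven]
  refine ⟨C, hCnn, fun u v => ?_⟩
  have h1 : ρ (u + v) ≤ ρ (|u| + |v|) := by
    rw [rabs (u + v)]
    exact hmono (Set.mem_Ici.mpr (abs_nonneg _))
      (Set.mem_Ici.mpr (by positivity)) ((abs_add_le u v).trans (le_refl _))
  rcases le_total |u| |v| with h | h
  · have := aux |u| |v| (abs_nonneg _) h
    rw [← rabs, ← rabs] at this
    linarith
  · have := aux |v| |u| (abs_nonneg _) h
    rw [← rabs, ← rabs] at this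
    have e : |v| + |u| = |u| + |v| := by ring
    rw [e] at this
    linarith

lemma locPost_isProb (ρ w : ℝ → ℝ) {n : ℕ} (Y : Fin n → ℝ) (hw : ∀ θ, 0 ≤ w θ)
    (hint : Integrable (fun t : ℝ => w t * Real.exp (-∑ j, ρ (Y j - t))))
    (hpos : 0 < ∫ t : ℝ, w t * Real.exp (-∑ j, ρ (Y j - t))) :
    IsProbabilityMeasure (locPostMeasure ρ w Y) := by
  constructor
  rw [locPostMeasure, withDensity_apply _ MeasurableSet.univ, setLIntegral_univ]
  unfold locPostDensity
  rw [← ofReal_integral_eq_lintegral_ofReal (hint.div_const _) ?h]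
  · rw [integral_div, div_self hpos.ne']
    norm_num
  case h =>
    filter_upwards with t
    exact div_nonneg (mul_nonneg (hw t) (Real.exp_nonneg _)) hpos.le



lemma second_moment_bound
    (ρ : ℝ → ℝ) (hnn : ∀ x, 0 ≤ ρ x) (heven : ∀ x, ρ (-x) = ρ x) (hρcont : Continuous ρ)
    (C : ℝ) (hC : 0 ≤ C) (hsub : ∀ u v : ℝ, ρ (u + v) ≤ ρ u + ρ v + C)
    (w : ℝ → ℝ) (hw : ∀ θ, 0 ≤ w θ)
    (hmom : Integrable (fun θ : ℝ => θ ^ 2 * (w θ * Real.exp (-ρ θ))))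
    (n : ℕ) (X : Fin n → ℝ)
    (hwell : ∀ Y : Fin n → ℝ,
      Integrable (fun t : ℝ => w t * Real.exp (-∑ j, ρ (Y j - t))) ∧
      0 < ∫ t : ℝ, w t * Real.exp (-∑ j, ρ (Y j - t)))
    (m : ℕ) (hm : 2 * m < n) :
    ∃ B : ℝ≥0∞, B ≠ ⊤ ∧ ∀ Y ∈ hammingBall X m,
      ∫⁻ θ : ℝ, ENNReal.ofReal (θ ^ 2) ∂(locPostMeasure ρ w Y) ≤ B := by
  classical
  -- some evenness corollaries
  have hflip : ∀ u v : ℝ, ρ (u - v) = ρ (v - u) := by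
    intro u v; rw [← heven (v - u)]; ring_nf
  have hsub' : ∀ u v : ℝ, ρ (u - v) ≤ ρ u + ρ v + C := by
    intro u v
    have := hsub u (-v)
    rw [heven] at this
    rw [sub_eq_add_neg]; exact this
  set RX : ℝ := ∑ j, ρ (X j) with hRX
  have hRXnn : 0 ≤ RX := Finset.sum_nonneg fun j _ => hnn _
  set D : ℝ := RX + n * C + n * (RX + 2 * C) with hD
  set E : ℝ := n * (2 * RX + 3 * C) with hE
  set M : ℝ := ∫ θ : ℝ, θ ^ 2 * (w θ * Real.exp (-ρ θ)) with hM
  set ZX : ℝ := ∫ t : ℝ, w t * Real.exp (-∑ j, ρ (X j - t)) with hZX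
  have hZXpos : 0 < ZX := (hwell X).2
  refine ⟨ENNReal.ofReal (Real.exp D * M / (Real.exp (-E) * ZX)), ofReal_ne_top, ?_⟩
  intro Y hY
  set bad : Finset (Fin n) := Finset.univ.filter (fun i => Y i ≠ X i) with hbadset
  have hbad : bad.card ≤ m := hY
  have hbadn : bad.card < n := lt_of_le_of_lt hbad (by omega)
  have hgood : ∃ j0 : Fin n, Y j0 = X j0 := by
    by_contra h
    push_neg at h
    have : bad = Finset.univ := by
      apply Finset.eq_univ_iff_forall.mpr
      intro i; simp [hbadset, h i]
    rw [this, Finset.card_univ, Fintype.card_fin] at hbadn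
    omega
  obtain ⟨j0, hj0⟩ := hgood
  set T : ℝ := ∑ j ∈ bad, ρ (Y j - X j0) with hT
  have hTnn : 0 ≤ T := Finset.sum_nonneg fun j _ => hnn _
  have hXj0 : ρ (X j0) ≤ RX := Finset.single_le_sum (f := fun j => ρ (X j))
    (fun j _ => hnn _) (Finset.mem_univ j0)
  have hb : (bad.card : ℝ) ≤ m := by exact_mod_cast hbad
  have hsplit : ∀ f : Fin n → ℝ, ∑ j, f j = ∑ j ∈ bad, f j + ∑ j ∈ badᶜ, f j := by
    intro f
    rw [Finset.sum_add_sum_compl]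
  have hcardsum : bad.card + badᶜ.card = n := by
    rw [Finset.card_add_card_compl, Fintype.card_fin]
  -- lower bound (★)
  have hlow : ∀ θ : ℝ, ρ θ + T - D ≤ ∑ j, ρ (Y j - θ) := by
    intro θ
    rw [hsplit (fun j => ρ (Y j - θ))]
    have h1 : ∑ j ∈ bad, (ρ (Y j - X j0) - ρ θ - (ρ (X j0) + 2 * C)) ≤
        ∑ j ∈ bad, ρ (Y j - θ) := by
      apply Finset.sum_le_sum
      intro j _
      have e1 : ρ (Y j - X j0) ≤ ρ (Y j - θ) + ρ (θ - X j0) + C := by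
        have := hsub (Y j - θ) (θ - X j0)
        have e : Y j - θ + (θ - X j0) = Y j - X j0 := by ring
        rwa [e] at this
      have e2 : ρ (θ - X j0) ≤ ρ θ + ρ (X j0) + C := hsub' θ (X j0)
      linarith
    have h2 : ∑ j ∈ badᶜ, (ρ θ - ρ (X j) - C) ≤ ∑ j ∈ badᶜ, ρ (Y j - θ) := by
      apply Finset.sum_le_sum
      intro j hj
      have hyj : Y j = X j := by
        simp only [hbadset, Finset.mem_compl, Finset.mem_filter, Finset.mem_univ,
          true_and, not_not] at hj
        exact hj
      have e1 : ρ θ ≤ ρ (θ - X j) + ρ (X j) + C := by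
        have := hsub (θ - X j) (X j)
        have e : θ - X j + X j = θ := by ring
        rwa [e] at this
      rw [hyj, hflip (X j) θ]
      linarith
    have s1 : ∑ j ∈ bad, (ρ (Y j - X j0) - ρ θ - (ρ (X j0) + 2 * C)) =
        T - bad.card * ρ θ - bad.card * (ρ (X j0) + 2 * C) := by
      rw [Finset.sum_sub_distrib, Finset.sum_sub_distrib, Finset.sum_const,
        Finset.sum_const]
      simp [hT]
      ring
    have s2 : ∑ j ∈ badᶜ, (ρ θ - ρ (X j) - C) =
        badᶜ.card * ρ θ - ∑ j ∈ badᶜ, ρ (X j) - badᶜ.card * C := by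
      rw [Finset.sum_sub_distrib, Finset.sum_sub_distrib, Finset.sum_const,
        Finset.sum_const]
      simp
    have hXsum : ∑ j ∈ badᶜ, ρ (X j) ≤ RX :=
      Finset.sum_le_sum_of_subset_of_nonneg (Finset.subset_univ _) (fun j _ _ => hnn _)
    have hcard : (bad.card : ℝ) + (badᶜ.card : ℝ) = n := by exact_mod_cast hcardsum
    have hρθ : 0 ≤ ρ θ := hnn θ
    have hmr : (2 * m + 1 : ℝ) ≤ n := by exact_mod_cast hm
    have hcoef : (1 : ℝ) ≤ (badᶜ.card : ℝ) - (bad.card : ℝ) := by linarith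
    have hbnn : (0:ℝ) ≤ (bad.card : ℝ) := Nat.cast_nonneg _
    have hgnn : (0:ℝ) ≤ (badᶜ.card : ℝ) := Nat.cast_nonneg _
    have hcc : (bad.card : ℝ) ≤ n := by linarith
    have hgn : (badᶜ.card : ℝ) ≤ n := by linarith
    rw [s1] at h1; rw [s2] at h2
    have hXj0' : (bad.card : ℝ) * (ρ (X j0) + 2 * C) ≤ n * (RX + 2 * C) := by
      apply mul_le_mul hcc (by linarith) (by linarith [hnn (X j0)]) (Nat.cast_nonneg _)
    have h3 : (badᶜ.card : ℝ) * C ≤ n * C := mul_le_mul_of_nonneg_right hgn hC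
    have h4 : (bad.card : ℝ) * ρ θ + ρ θ ≤ (badᶜ.card : ℝ) * ρ θ := by
      nlinarith
    linarith
  -- upper bound (★★)
  have hupp : ∀ θ : ℝ, ∑ j, ρ (Y j - θ) ≤ (∑ j, ρ (X j - θ)) + T + E := by
    intro θ
    rw [hsplit (fun j => ρ (Y j - θ)), hsplit (fun j => ρ (X j - θ))]
    have h1 : ∑ j ∈ bad, ρ (Y j - θ) ≤
        ∑ j ∈ bad, (ρ (Y j - X j0) + ρ (X j - θ) + (2 * RX + 3 * C)) := by
      apply Finset.sum_le_sum
      intro j _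
      have e1 : ρ (Y j - θ) ≤ ρ (Y j - X j0) + ρ (X j0 - θ) + C := by
        have := hsub (Y j - X j0) (X j0 - θ)
        have e : Y j - X j0 + (X j0 - θ) = Y j - θ := by ring
        rwa [e] at this
      have e2 : ρ (X j0 - θ) ≤ ρ (X j - θ) + ρ (X j0 - X j) + C := by
        have := hsub (X j - θ) (X j0 - X j)
        have e : X j - θ + (X j0 - X j) = X j0 - θ := by ring
        rwa [e] at this
      have e3 : ρ (X j0 - X j) ≤ ρ (X j0) + ρ (X j) + C := hsub' _ _
      have e4 : ρ (X j) ≤ RX := Finset.single_le_sum (f := fun j => ρ (X j))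
        (fun j _ => hnn _) (Finset.mem_univ j)
      linarith
    have s1 : ∑ j ∈ bad, (ρ (Y j - X j0) + ρ (X j - θ) + (2 * RX + 3 * C)) =
        T + ∑ j ∈ bad, ρ (X j - θ) + bad.card * (2 * RX + 3 * C) := by
      rw [Finset.sum_add_distrib, Finset.sum_add_distrib, Finset.sum_const]
      simp [hT]
      ring
    have h2 : ∑ j ∈ badᶜ, ρ (Y j - θ) = ∑ j ∈ badᶜ, ρ (X j - θ) := by
      apply Finset.sum_congr rfl
      intro j hj
      have hyj : Y j = X j := by
        simp only [hbadset, Finset.mem_compl, Finset.mem_filter, Finset.mem_univ,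
          true_and, not_not] at hj
        exact hj
      rw [hyj]
    have hccn : bad.card ≤ n := by omega
    have hcc : (bad.card : ℝ) ≤ n := by exact_mod_cast hccn
    have h5 : (bad.card : ℝ) * (2 * RX + 3 * C) ≤ E := by
      rw [hE]
      apply mul_le_mul hcc (le_refl _) (by linarith) (Nat.cast_nonneg _)
    linarith [h1, s1, h2]
  -- now the integral estimates
  set SY : ℝ → ℝ := fun θ => ∑ j, ρ (Y j - θ) with hSYdef
  set ZY : ℝ := ∫ t : ℝ, w t * Real.exp (-∑ j, ρ (Y j - t)) with hZYdef
  have hZYpos : 0 < ZY := (hwell Y).2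
  have hcontSY : Continuous fun t : ℝ => Real.exp (-∑ j, ρ (Y j - t)) := by
    apply Real.continuous_exp.comp
    apply Continuous.neg
    apply continuous_finset_sum
    intro j _
    exact hρcont.comp (continuous_const.sub continuous_id)
  have hcontSX : Continuous fun t : ℝ => Real.exp (∑ j, ρ (X j - t)) := by
    apply Real.continuous_exp.comp
    apply continuous_finset_sum
    intro j _
    exact hρcont.comp (continuous_const.sub continuous_id)
  have hwm : AEMeasurable w volume := by
    have h := (hwell X).1.aestronglyMeasurable.aemeasurable
    have he : w = fun t => (w t * Real.exp (-∑ j, ρ (X j - t))) * Real.exp (∑ j, ρ (X j - t)) := by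
      funext t
      rw [mul_assoc, ← Real.exp_add]
      simp
    rw [he]
    exact h.mul hcontSX.aemeasurable
  have hZ : Real.exp (-(T + E)) * ZX ≤ ZY := by
    rw [hZX, hZYdef, ← integral_const_mul]
    apply integral_mono ((hwell X).1.const_mul _) (hwell Y).1
    intro t
    have h1 : Real.exp (-(T + E)) * Real.exp (-∑ j, ρ (X j - t)) ≤
        Real.exp (-∑ j, ρ (Y j - t)) := by
      rw [← Real.exp_add]
      apply Real.exp_le_exp.mpr
      linarith [hupp t]
    calc Real.exp (-(T + E)) * (w t * Real.exp (-∑ j, ρ (X j - t)))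
        = w t * (Real.exp (-(T + E)) * Real.exp (-∑ j, ρ (X j - t))) := by ring
      _ ≤ w t * Real.exp (-∑ j, ρ (Y j - t)) := mul_le_mul_of_nonneg_left h1 (hw t)
  have hNum : (∫⁻ θ : ℝ, ENNReal.ofReal (θ ^ 2 * (w θ * Real.exp (-SY θ)))) ≤
      ENNReal.ofReal (Real.exp (D - T) * M) := by
    have hpt : ∀ θ : ℝ, θ ^ 2 * (w θ * Real.exp (-SY θ)) ≤
        Real.exp (D - T) * (θ ^ 2 * (w θ * Real.exp (-ρ θ))) := by
      intro θ
      have h1 : Real.exp (-(SY θ)) ≤ Real.exp (D - T) * Real.exp (-ρ θ) := by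
        rw [← Real.exp_add]
        apply Real.exp_le_exp.mpr
        have := hlow θ
        simp only [hSYdef]
        linarith
      calc θ ^ 2 * (w θ * Real.exp (-SY θ))
          ≤ θ ^ 2 * (w θ * (Real.exp (D - T) * Real.exp (-ρ θ))) := by
            apply mul_le_mul_of_nonneg_left (mul_le_mul_of_nonneg_left h1 (hw θ)) (sq_nonneg θ)
        _ = Real.exp (D - T) * (θ ^ 2 * (w θ * Real.exp (-ρ θ))) := by ring
    calc (∫⁻ θ : ℝ, ENNReal.ofReal (θ ^ 2 * (w θ * Real.exp (-SY θ))))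
        ≤ ∫⁻ θ : ℝ, ENNReal.ofReal (Real.exp (D - T) * (θ ^ 2 * (w θ * Real.exp (-ρ θ)))) :=
          lintegral_mono fun θ => ENNReal.ofReal_le_ofReal (hpt θ)
      _ = ENNReal.ofReal (∫ θ : ℝ, Real.exp (D - T) * (θ ^ 2 * (w θ * Real.exp (-ρ θ)))) :=
          (ofReal_integral_eq_lintegral_ofReal (hmom.const_mul _) (Filter.Eventually.of_forall
            fun θ => mul_nonneg (Real.exp_nonneg _) (mul_nonneg (sq_nonneg _)
              (mul_nonneg (hw θ) (Real.exp_nonneg _))))).symm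
      _ = ENNReal.ofReal (Real.exp (D - T) * M) := by rw [integral_const_mul]
  have hdens : AEMeasurable (fun θ => ENNReal.ofReal (locPostDensity ρ w Y θ)) volume := by
    apply AEMeasurable.ennreal_ofReal
    unfold locPostDensity
    exact (hwell Y).1.aestronglyMeasurable.aemeasurable.div_const _
  have hnumMeas : AEMeasurable (fun θ : ℝ => ENNReal.ofReal (θ ^ 2 * (w θ * Real.exp (-SY θ))))
      volume := by
    apply AEMeasurable.ennreal_ofReal
    exact ((continuous_pow 2).aemeasurable.mul (hwm.mul hcontSY.aemeasurable))
  have hM2 : (∫⁻ θ : ℝ, ENNReal.ofReal (θ ^ 2) ∂(locPostMeasure ρ w Y))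
      = (∫⁻ θ : ℝ, ENNReal.ofReal (θ ^ 2 * (w θ * Real.exp (-SY θ)))) / ENNReal.ofReal ZY := by
    have hg : Measurable fun θ : ℝ => ENNReal.ofReal (θ ^ 2) :=
      (measurable_id.pow_const 2).ennreal_ofReal
    rw [locPostMeasure, lintegral_withDensity_eq_lintegral_mul₀ hdens hg.aemeasurable]
    have hpt : ∀ θ : ℝ, ENNReal.ofReal (locPostDensity ρ w Y θ) * ENNReal.ofReal (θ ^ 2)
        = ENNReal.ofReal (θ ^ 2 * (w θ * Real.exp (-SY θ))) * (ENNReal.ofReal ZY)⁻¹ := by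
      intro θ
      have hd0 : 0 ≤ locPostDensity ρ w Y θ :=
        div_nonneg (mul_nonneg (hw θ) (Real.exp_nonneg _)) hZYpos.le
      rw [← ENNReal.ofReal_mul hd0]
      rw [← div_eq_mul_inv, ← ENNReal.ofReal_div_of_pos hZYpos]
      congr 1
      unfold locPostDensity
      rw [← hZYdef]
      ring
    calc (∫⁻ θ : ℝ, (fun θ => ENNReal.ofReal (locPostDensity ρ w Y θ)) θ
            * (fun θ : ℝ => ENNReal.ofReal (θ ^ 2)) θ)
        = ∫⁻ θ : ℝ, ENNReal.ofReal (θ ^ 2 * (w θ * Real.exp (-SY θ))) * (ENNReal.ofReal ZY)⁻¹ :=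
          lintegral_congr fun θ => hpt θ
      _ = (∫⁻ θ : ℝ, ENNReal.ofReal (θ ^ 2 * (w θ * Real.exp (-SY θ)))) * (ENNReal.ofReal ZY)⁻¹ :=
          lintegral_mul_const'' _ hnumMeas
      _ = _ := (div_eq_mul_inv _ _).symm
  rw [hM2]
  have hfin : (∫⁻ θ : ℝ, ENNReal.ofReal (θ ^ 2 * (w θ * Real.exp (-SY θ)))) / ENNReal.ofReal ZY
      ≤ ENNReal.ofReal (Real.exp (D - T) * M) / ENNReal.ofReal (Real.exp (-(T + E)) * ZX) :=
    ENNReal.div_le_div hNum (ENNReal.ofReal_le_ofReal hZ)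
  refine le_trans hfin ?_
  rw [← ENNReal.ofReal_div_of_pos (_root_.mul_pos (Real.exp_pos _) hZXpos)]
  apply ENNReal.ofReal_le_ofReal
  have key : Real.exp (D - T) / Real.exp (-(T + E)) = Real.exp D / Real.exp (-E) := by
    rw [← Real.exp_sub, ← Real.exp_sub]
    congr 1
    ring
  have e : Real.exp (D - T) * M / (Real.exp (-(T + E)) * ZX)
      = Real.exp D * M / (Real.exp (-E) * ZX) := by
    calc Real.exp (D - T) * M / (Real.exp (-(T + E)) * ZX)
        = Real.exp (D - T) / Real.exp (-(T + E)) * (M / ZX) := by ring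
      _ = Real.exp D / Real.exp (-E) * (M / ZX) := by rw [key]
      _ = Real.exp D * M / (Real.exp (-E) * ZX) := by ring
  rw [e]

lemma W2_le_of_second_moment (P Q : Measure ℝ) [IsProbabilityMeasure P] [IsProbabilityMeasure Q]
    (B : ℝ≥0∞)
    (hP : (∫⁻ x : ℝ, ENNReal.ofReal (x ^ 2) ∂P) ≤ B)
    (hQ : (∫⁻ x : ℝ, ENNReal.ofReal (x ^ 2) ∂Q) ≤ B) :
    W2 P Q ≤ (4 * B) ^ (1/2 : ℝ) := by
  unfold W2
  apply ENNReal.rpow_le_rpow _ (by norm_num)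
  have hmarg : (P.prod Q).map Prod.fst = P ∧ (P.prod Q).map Prod.snd = Q := by
    constructor
    · rw [Measure.map_fst_prod]; simp
    · rw [Measure.map_snd_prod]; simp
  refine le_trans (iInf_le_of_le (P.prod Q) (iInf_le_of_le hmarg (le_refl _))) ?_
  have hg : Measurable fun x : ℝ => ENNReal.ofReal (x ^ 2) :=
    (measurable_id.pow_const 2).ennreal_ofReal
  have hpt : ∀ z : ℝ × ℝ, ENNReal.ofReal ((z.1 - z.2) ^ 2) ≤
      2 * ENNReal.ofReal (z.1 ^ 2) + 2 * ENNReal.ofReal (z.2 ^ 2) := by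
    intro z
    calc ENNReal.ofReal ((z.1 - z.2) ^ 2) ≤ ENNReal.ofReal (2 * z.1 ^ 2 + 2 * z.2 ^ 2) :=
        ENNReal.ofReal_le_ofReal (by nlinarith [sq_nonneg (z.1 + z.2)])
      _ = ENNReal.ofReal (2 * z.1 ^ 2) + ENNReal.ofReal (2 * z.2 ^ 2) :=
        ENNReal.ofReal_add (by positivity) (by positivity)
      _ = 2 * ENNReal.ofReal (z.1 ^ 2) + 2 * ENNReal.ofReal (z.2 ^ 2) := by
        rw [ENNReal.ofReal_mul (by norm_num), ENNReal.ofReal_mul (by norm_num)]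
        norm_num
  have m1 : (∫⁻ z : ℝ × ℝ, ENNReal.ofReal (z.1 ^ 2) ∂(P.prod Q))
      = ∫⁻ x : ℝ, ENNReal.ofReal (x ^ 2) ∂P := by
    rw [← lintegral_map hg measurable_fst, hmarg.1]
  have m2 : (∫⁻ z : ℝ × ℝ, ENNReal.ofReal (z.2 ^ 2) ∂(P.prod Q))
      = ∫⁻ x : ℝ, ENNReal.ofReal (x ^ 2) ∂Q := by
    rw [← lintegral_map hg measurable_snd, hmarg.2]
  calc (∫⁻ z : ℝ × ℝ, ENNReal.ofReal ((z.1 - z.2) ^ 2) ∂(P.prod Q))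
      ≤ ∫⁻ z : ℝ × ℝ, (2 * ENNReal.ofReal (z.1 ^ 2) + 2 * ENNReal.ofReal (z.2 ^ 2))
        ∂(P.prod Q) := lintegral_mono hpt
    _ = 2 * (∫⁻ z : ℝ × ℝ, ENNReal.ofReal (z.1 ^ 2) ∂(P.prod Q))
        + 2 * ∫⁻ z : ℝ × ℝ, ENNReal.ofReal (z.2 ^ 2) ∂(P.prod Q) := by
        have hf1 : Measurable fun z : ℝ × ℝ => 2 * ENNReal.ofReal (z.1 ^ 2) :=
          (hg.comp measurable_fst).const_mul 2
        have hf2 : Measurable fun z : ℝ × ℝ => ENNReal.ofReal (z.1 ^ 2) :=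
          hg.comp measurable_fst
        have hf3 : Measurable fun z : ℝ × ℝ => ENNReal.ofReal (z.2 ^ 2) :=
          hg.comp measurable_snd
        rw [lintegral_add_left hf1, lintegral_const_mul 2 hf2, lintegral_const_mul 2 hf3]
    _ = 2 * (∫⁻ x : ℝ, ENNReal.ofReal (x ^ 2) ∂P) + 2 * ∫⁻ x : ℝ, ENNReal.ofReal (x ^ 2) ∂Q := by
        rw [m1, m2]
    _ ≤ 2 * B + 2 * B := add_le_add (mul_le_mul_right hP 2) (mul_le_mul_right hQ 2)
    _ = 4 * B := by ring

lemma supW2_eq_top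
    (ρ : ℝ → ℝ) (hnn : ∀ x, 0 ≤ ρ x) (heven : ∀ x, ρ (-x) = ρ x)
    (w : ℝ → ℝ) (hw1 : ∀ θ, w θ = 1)
    (n : ℕ) (hn : 0 < n) (X : Fin n → ℝ)
    (hwell : ∀ Y : Fin n → ℝ,
      Integrable (fun t : ℝ => w t * Real.exp (-∑ j, ρ (Y j - t))) ∧
      0 < ∫ t : ℝ, w t * Real.exp (-∑ j, ρ (Y j - t)))
    (m : ℕ) (hmn : m ≤ n) (h2m : n ≤ 2 * m) :
    (⨆ Y ∈ hammingBall X m, W2 (locPostMeasure ρ w Y) (locPostMeasure ρ w X)) = ⊤ := by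
  classical
  have hw : ∀ θ, 0 ≤ w θ := fun θ => by rw [hw1]; norm_num
  set k : ℕ := n - m with hk
  have h2k : 2 * k ≤ n := by omega
  -- the fixed reference posterior
  haveI hPX : IsProbabilityMeasure (locPostMeasure ρ w X) :=
    locPost_isProb ρ w X hw (hwell X).1 (hwell X).2
  -- choose t₀ with P_X (Iic t₀) > 3/4
  obtain ⟨t₀, ht₀⟩ : ∃ t₀ : ℝ, ENNReal.ofReal (3/4) < (locPostMeasure ρ w X) (Set.Iic t₀) := by
    have h := tendsto_measure_Iic_atTop (locPostMeasure ρ w X)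
    rw [measure_univ] at h
    have : ∀ᶠ t : ℝ in atTop, ENNReal.ofReal (3/4) < (locPostMeasure ρ w X) (Set.Iic t) := by
      apply h.eventually (eventually_gt_nhds ?_)
      rw [← ENNReal.ofReal_one, ENNReal.ofReal_lt_ofReal_iff (by norm_num)]
      norm_num
    exact this.exists
  have hIoi : (locPostMeasure ρ w X) (Set.Ioi t₀) ≤ ENNReal.ofReal (1/4) := by
    by_contra hcon
    push_neg at hcon
    have hdisj : (locPostMeasure ρ w X) (Set.Iic t₀) + (locPostMeasure ρ w X) (Set.Ioi t₀)
        = 1 := by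
      rw [← measure_union (Set.Iic_disjoint_Ioi le_rfl) measurableSet_Ioi,
        Set.Iic_union_Ioi, measure_univ]
    have h2 := ENNReal.add_lt_add ht₀ hcon
    rw [← ENNReal.ofReal_add (by norm_num) (by norm_num)] at h2
    norm_num at h2
    rw [hdisj] at h2
    exact absurd h2 (lt_irrefl _)
  -- main claim: unboundedness
  have main : ∀ b : ℝ≥0∞, b < ⊤ → ∃ Y ∈ hammingBall X m,
      b < W2 (locPostMeasure ρ w Y) (locPostMeasure ρ w X) := by
    intro b hb
    set s : ℝ := 2 * (b.toReal + 1) + 2 * |t₀| + 2 with hs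
    have hspos : 0 < s := by positivity
    set c : ℝ := t₀ + s with hc
    have hct : t₀ ≤ c := by linarith
    -- natural-number level construction
    set X' : ℕ → ℝ := fun i => if h : i < n then X ⟨i, h⟩ else 0 with hX'
    set g : ℕ → ℝ := fun i => if i < k then X' i else if i < 2 * k then 2 * c - X' (i - k)
      else c with hg
    set t : ℕ → ℕ := fun i => if i < k then i + k else if i < 2 * k then i - k else i with ht
    have htlt : ∀ i, i < n → t i < n := by
      intro i hi
      simp only [ht]
      split_ifs <;> omega
    have htt : ∀ i, i < n → t (t i) = i := by
      intro i hi
      simp only [ht]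
      split_ifs <;> omega
    have hgt : ∀ i, i < n → g (t i) = 2 * c - g i := by
      intro i hi
      by_cases h1 : i < k
      · have e1 : t i = i + k := by simp only [ht, if_pos h1]
        have e2 : g i = X' i := by simp only [hg, if_pos h1]
        have e3 : g (i + k) = 2 * c - X' i := by
          simp only [hg]
          rw [if_neg (by omega), if_pos (by omega), Nat.add_sub_cancel]
        rw [e1, e2, e3]
      · by_cases h2 : i < 2 * k
        · have e1 : t i = i - k := by simp only [ht, if_neg h1, if_pos h2]
          have e2 : g i = 2 * c - X' (i - k) := by simp only [hg, if_neg h1, if_pos h2]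
          have e3 : g (i - k) = X' (i - k) := by
            simp only [hg]
            rw [if_pos (by omega)]
          rw [e1, e2, e3]
          ring
        · have e1 : t i = i := by simp only [ht, if_neg h1, if_neg h2]
          have e2 : g i = c := by simp only [hg, if_neg h1, if_neg h2]
          rw [e1, e2]
          ring
    set Y : Fin n → ℝ := fun j => g j with hY
    have hYX : ∀ j : Fin n, (j : ℕ) < k → Y j = X j := by
      intro j hj
      simp only [hY, hg, if_pos hj, hX']
      rw [dif_pos j.isLt]
    have hYmem : Y ∈ hammingBall X m := by
      have hsub : (Finset.univ.filter fun i : Fin n => Y i ≠ X i) ⊆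
          Finset.univ.filter fun i : Fin n => k ≤ (i : ℕ) := by
        intro i hi
        simp only [Finset.mem_filter, Finset.mem_univ, true_and] at hi ⊢
        by_contra hik
        push_neg at hik
        exact hi (hYX i hik)
      have hcard : (Finset.univ.filter fun i : Fin n => k ≤ (i : ℕ)).card ≤ m := by
        apply le_trans (Finset.card_le_card_of_injOn (fun i : Fin n => (i : ℕ) - k)
          ?_ ?_) (le_of_eq (Finset.card_range m))
        · intro i hi
          simp only [Finset.mem_coe, Finset.mem_filter, Finset.mem_univ, true_and] at hi
          have := i.isLt
          simp only [Finset.mem_coe, Finset.mem_range]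
          omega
        · intro i hi j hj hij
          simp only [Finset.mem_coe, Finset.mem_filter, Finset.mem_univ, true_and] at hi hj
          have := i.isLt; have := j.isLt
          apply Fin.ext
          simp only at hij
          omega
      exact le_trans (Finset.card_le_card hsub) hcard
    -- the reflecting involution
    set sfun : Fin n → Fin n := fun j => ⟨t j, htlt j j.isLt⟩ with hsfun
    have hinv : Function.Involutive sfun := by
      intro j
      apply Fin.ext
      simp only [hsfun]
      exact htt j j.isLt
    have hrefl : ∀ j : Fin n, Y (sfun j) = 2 * c - Y j := by
      intro j
      simp only [hY, hsfun]
      exact hgt j j.isLt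
    -- sum invariance
    have hsum : ∀ θ : ℝ, ∑ j, ρ (Y j - (2 * c - θ)) = ∑ j, ρ (Y j - θ) := by
      intro θ
      have e : ∀ j : Fin n, ρ (Y j - (2 * c - θ)) = ρ (Y (sfun j) - θ) := by
        intro j
        rw [hrefl j, ← heven]
        congr 1
        ring
      rw [Finset.sum_congr rfl (fun j _ => e j)]
      exact Equiv.sum_comp (Function.Involutive.toPerm sfun hinv) (fun j => ρ (Y j - θ))
    -- density symmetry
    have hfs : ∀ θ : ℝ, locPostDensity ρ w Y (2 * c - θ) = locPostDensity ρ w Y θ := by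
      intro θ
      unfold locPostDensity
      rw [hw1, hw1, hsum]
    -- posterior prob measure
    haveI hPY : IsProbabilityMeasure (locPostMeasure ρ w Y) :=
      locPost_isProb ρ w Y hw (hwell Y).1 (hwell Y).2
    -- symmetry of measure: P (Ici c) = P (Iic c)
    have hsym : (locPostMeasure ρ w Y) (Set.Ici c) = (locPostMeasure ρ w Y) (Set.Iic c) := by
      have hpre : (fun x : ℝ => 2 * c - x) ⁻¹' (Set.Ici c) = Set.Iic c := by
        ext x
        simp only [Set.mem_preimage, Set.mem_Ici, Set.mem_Iic]
        constructor <;> intro h <;> linarith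
      have hmp : MeasurePreserving (fun x : ℝ => 2 * c - x) volume volume :=
        Measure.measurePreserving_sub_left volume (2 * c)
      have hemb : MeasurableEmbedding (fun x : ℝ => 2 * c - x) :=
        (MeasurableEquiv.subLeft (2 * c)).measurableEmbedding
      rw [locPostMeasure, withDensity_apply _ measurableSet_Ici,
        withDensity_apply _ measurableSet_Iic]
      have key := hmp.setLIntegral_comp_preimage_emb hemb
        (fun θ => ENNReal.ofReal (locPostDensity ρ w Y θ)) (Set.Ici c)
      rw [hpre] at key
      rw [← key]
      apply lintegral_congr
      intro x
      rw [hfs]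
    -- P_Y (Ici c) ≥ 1/2
    have hhalf : ENNReal.ofReal (1/2) ≤ (locPostMeasure ρ w Y) (Set.Ici c) := by
      have huniv : (1:ℝ≥0∞) ≤ (locPostMeasure ρ w Y) (Set.Ici c)
          + (locPostMeasure ρ w Y) (Set.Iic c) := by
        rw [← measure_univ (μ := locPostMeasure ρ w Y), ← Set.Iic_union_Ici (a := c)]
        exact le_trans (measure_union_le _ _) (le_of_eq (add_comm _ _))
      rw [← hsym] at huniv
      by_contra hcon
      push_neg at hcon
      have h2 := ENNReal.add_lt_add hcon hcon
      rw [← ENNReal.ofReal_add (by norm_num) (by norm_num)] at h2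
      rw [show (1:ℝ)/2 + 1/2 = 1 by norm_num, ENNReal.ofReal_one] at h2
      exact absurd (lt_of_le_of_lt huniv h2) (lt_irrefl _)
    -- lower bound for the transport cost of any coupling
    have hW2 : ENNReal.ofReal (b.toReal + 1) ≤
        W2 (locPostMeasure ρ w Y) (locPostMeasure ρ w X) := by
      unfold W2
      have hlow : ENNReal.ofReal ((s - 2 * |t₀|) ^ 2) * ENNReal.ofReal (1/4) ≤
          ⨅ (γ : Measure (ℝ × ℝ)) (_ : γ.map Prod.fst = locPostMeasure ρ w Y ∧
            γ.map Prod.snd = locPostMeasure ρ w X),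
          ∫⁻ z, ENNReal.ofReal ((z.1 - z.2) ^ 2) ∂γ := by
        apply le_iInf
        intro γ
        apply le_iInf
        intro hγ
        set S : Set (ℝ × ℝ) := Set.Ici c ×ˢ Set.Iic t₀ with hS
        have hSmeas : MeasurableSet S := measurableSet_Ici.prod measurableSet_Iic
        have hγS : ENNReal.ofReal (1/4) ≤ γ S := by
          have h1 : γ (Prod.fst ⁻¹' (Set.Ici c)) = (locPostMeasure ρ w Y) (Set.Ici c) := by
            rw [← hγ.1, Measure.map_apply measurable_fst measurableSet_Ici]
          have h2 : γ (Prod.snd ⁻¹' (Set.Ioi t₀)) = (locPostMeasure ρ w X) (Set.Ioi t₀) := by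
            rw [← hγ.2, Measure.map_apply measurable_snd measurableSet_Ioi]
          have hsubset : Prod.fst ⁻¹' (Set.Ici c) ⊆ S ∪ Prod.snd ⁻¹' (Set.Ioi t₀) := by
            intro z hz
            by_cases hz2 : z.2 ≤ t₀
            · exact Or.inl ⟨hz, hz2⟩
            · exact Or.inr (by simpa using lt_of_not_ge hz2)
          have hle : (locPostMeasure ρ w Y) (Set.Ici c) ≤ γ S + ENNReal.ofReal (1/4) := by
            calc (locPostMeasure ρ w Y) (Set.Ici c) = γ (Prod.fst ⁻¹' (Set.Ici c)) := h1.symm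
              _ ≤ γ (S ∪ Prod.snd ⁻¹' (Set.Ioi t₀)) := measure_mono hsubset
              _ ≤ γ S + γ (Prod.snd ⁻¹' (Set.Ioi t₀)) := measure_union_le _ _
              _ ≤ γ S + ENNReal.ofReal (1/4) := by
                  rw [h2]; exact add_le_add le_rfl hIoi
          have h3 := le_trans hhalf hle
          rw [show ENNReal.ofReal (1/2) = ENNReal.ofReal (1/4) + ENNReal.ofReal (1/4) by
            rw [← ENNReal.ofReal_add (by norm_num) (by norm_num)]; norm_num] at h3
          exact ENNReal.le_of_add_le_add_right ENNReal.ofReal_ne_top h3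
        calc ENNReal.ofReal ((s - 2 * |t₀|) ^ 2) * ENNReal.ofReal (1/4)
            ≤ ENNReal.ofReal ((c - t₀) ^ 2) * γ S := by
              apply mul_le_mul' (ENNReal.ofReal_le_ofReal ?_) hγS
              have h1 : s - 2 * |t₀| ≤ c - t₀ := by
                have h2 := le_abs_self t₀
                have h3 := neg_abs_le t₀
                have h4 := abs_nonneg t₀
                simp only [hc]
                linarith
              have h5 : (0:ℝ) ≤ s - 2 * |t₀| := by
                simp only [hs]
                have := ENNReal.toReal_nonneg (a := b)
                have := abs_nonneg t₀
                linarith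
              exact pow_le_pow_left₀ h5 h1 2
          _ = ∫⁻ z, S.indicator (fun _ => ENNReal.ofReal ((c - t₀) ^ 2)) z ∂γ := by
              rw [lintegral_indicator_const hSmeas]
          _ ≤ ∫⁻ z, ENNReal.ofReal ((z.1 - z.2) ^ 2) ∂γ := by
              apply lintegral_mono
              intro z
              by_cases hzS : z ∈ S
              · rw [Set.indicator_of_mem hzS]
                apply ENNReal.ofReal_le_ofReal
                have h1 : c ≤ z.1 := hzS.1
                have h2 : z.2 ≤ t₀ := hzS.2
                exact pow_le_pow_left₀ (by linarith) (by linarith) 2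
              · rw [Set.indicator_of_notMem hzS]
                exact zero_le
      refine le_trans ?_ (ENNReal.rpow_le_rpow hlow (by norm_num))
      have hsnn : (0:ℝ) ≤ s - 2 * |t₀| := by
        simp only [hs]
        have := ENNReal.toReal_nonneg (a := b)
        have := abs_nonneg t₀
        linarith
      have e1 : ENNReal.ofReal ((s - 2 * |t₀|) ^ 2) * ENNReal.ofReal (1/4)
          = ENNReal.ofReal (((s - 2 * |t₀|)/2) ^ 2) := by
        rw [← ENNReal.ofReal_mul (by positivity)]
        congr 1
        ring
      rw [e1, ENNReal.ofReal_rpow_of_nonneg (by positivity) (by norm_num)]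
      apply ENNReal.ofReal_le_ofReal
      rw [← Real.sqrt_eq_rpow, Real.sqrt_sq (by positivity)]
      have := abs_nonneg t₀
      simp only [hs]
      linarith
    refine ⟨Y, hYmem, lt_of_lt_of_le ?_ hW2⟩
    conv_lhs => rw [← ENNReal.ofReal_toReal hb.ne]
    rw [ENNReal.ofReal_lt_ofReal_iff (by positivity)]
    linarith
  by_contra hcon
  have hlt : (⨆ Y ∈ hammingBall X m, W2 (locPostMeasure ρ w Y) (locPostMeasure ρ w X)) < ⊤ :=
    lt_top_iff_ne_top.mpr hcon
  obtain ⟨Y, hYm, hgt⟩ := main _ hlt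
  have hle : W2 (locPostMeasure ρ w Y) (locPostMeasure ρ w X) ≤
      ⨆ Y ∈ hammingBall X m, W2 (locPostMeasure ρ w Y) (locPostMeasure ρ w X) :=
    le_iSup₂ (f := fun Y _ => W2 (locPostMeasure ρ w Y) (locPostMeasure ρ w X)) Y hYm
  exact absurd (lt_of_lt_of_le hgt hle) (lt_irrefl _)

end AuxiliaryLemmas

/-- **Breakdown point of redescending M-posteriors.**
For an even loss vanishing at `0`, nondecreasing on `[0,∞)`, tending to `∞` sublinearly, with
continuous derivative that first increases and then decreases, and a (possibly improper) prior
with `∫ θ² π(θ) e^{−ρ(θ)} dθ < ∞` whose location M-posterior is well defined for every sample: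
the posterior cannot be broken with `2m < n` corrupted points (breakdown point `≥ 1/2`), and
with the improper flat prior `π ≡ 1` the breakdown point equals `1/2`. -/
theorem breakdown_point_redescending
    (ρ ψ : ℝ → ℝ)
    (hnn : ∀ x, 0 ≤ ρ x) (heven : ∀ x, ρ (-x) = ρ x) (hρ0 : ρ 0 = 0)
    (hmono : MonotoneOn ρ (Set.Ici 0))
    (htop : Tendsto ρ atTop atTop)
    (hsublin : Tendsto (fun x => ρ x / x) atTop (nhds 0))
    (hderiv : ∀ x, HasDerivAt ρ (ψ x) x) (hψcont : Continuous ψ)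
    (x₀ : ℝ) (hx₀ : 0 < x₀)
    (hψup : MonotoneOn ψ (Set.Ioo 0 x₀)) (hψdown : AntitoneOn ψ (Set.Ioi x₀))
    (w : ℝ → ℝ) (hw : ∀ θ, 0 ≤ w θ)
    (hmom : Integrable (fun θ : ℝ => θ ^ 2 * (w θ * Real.exp (-ρ θ))))
    (n : ℕ) (hn : 0 < n) (X : Fin n → ℝ)
    (hwell : ∀ Y : Fin n → ℝ,
      Integrable (fun t : ℝ => w t * Real.exp (-∑ j, ρ (Y j - t))) ∧
      0 < ∫ t : ℝ, w t * Real.exp (-∑ j, ρ (Y j - t))) :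
    (∀ m ≤ n, 2 * m < n → supW2 ρ w X m ≠ ⊤) ∧
    ((∀ θ, w θ = 1) → ∀ m ≤ n,
      (2 * m < n → supW2 ρ w X m ≠ ⊤) ∧ (n ≤ 2 * m → supW2 ρ w X m = ⊤)) := by
  have hρcont : Continuous ρ := by
    rw [continuous_iff_continuousAt]
    exact fun x => (hderiv x).continuousAt
  obtain ⟨C, hC, hsub⟩ := rho_subadd_aux ρ ψ hnn heven hmono hderiv hψcont x₀ hx₀ hψup hψdown
  have part1 : ∀ m ≤ n, 2 * m < n → supW2 ρ w X m ≠ ⊤ := by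
    intro m hmn h2m
    obtain ⟨B, hBne, hB⟩ := second_moment_bound ρ hnn heven hρcont C hC hsub w hw hmom n X
      hwell m h2m
    have hXball : X ∈ hammingBall X m := by
      simp [hammingBall]
    have hbound : supW2 ρ w X m ≤ (4 * B) ^ (1/2 : ℝ) := by
      rw [supW2]
      apply iSup₂_le
      intro Y hY
      haveI := locPost_isProb ρ w Y hw (hwell Y).1 (hwell Y).2
      haveI := locPost_isProb ρ w X hw (hwell X).1 (hwell X).2
      exact W2_le_of_second_moment _ _ B (hB Y hY) (hB X hXball)
    intro htop
    rw [htop] at hbound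
    have hlt : (4 * B) ^ (1/2:ℝ) < ⊤ :=
      ENNReal.rpow_lt_top_of_nonneg (by norm_num) (ENNReal.mul_ne_top (by norm_num) hBne)
    have h1 : (4 * B) ^ (1/2:ℝ) = ⊤ := top_le_iff.mp hbound
    rw [h1] at hlt
    exact lt_irrefl _ hlt
  refine ⟨part1, ?_⟩
  intro hw1 m hmn
  refine ⟨part1 m hmn, ?_⟩
  intro h2m
  have := supW2_eq_top ρ hnn heven w hw1 n hn X hwell m hmn h2m
  rw [supW2]
  exact this
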